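/- Let p be a prime, k a field of characteristic p, X a finite set, and σ : X ≃ X a permutation with σ^p = 1. Let V := (X → k) be the permutation representation, T : V →ₗ[k] V the k-linear map f ↦ f ∘ σ⁻¹, and x := T − id. Then x^p = 0, the k-dimension of φ_1(V,x) equals the number of fixed points of σ in X, and φ_i(V,x) = 0 for every 2 ≤ i ≤ p−1. -/

import Mathlib

open Polynomial in
lemma aux_poly {p : ℕ} (hp : p.Prime) {k : Type*} [Field k] [CharP k p]
    {A : Type*} [Ring A] [Algebra k A] (t : A) (ht : t ^ p = 1) :
    (t - 1) ^ p = 0 ∧ (t - 1) ^ (p - 1) = ∑ j ∈ Finset.range p, t ^ j := by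
  haveI : Fact p.Prime := ⟨hp⟩
  have hpoly : ((X : k[X]) - 1) ^ p = X ^ p - 1 := by
    simpa using sub_pow_char (R := k[X]) X 1
  have hne : ((X : k[X]) - 1) ≠ 0 := by
    simpa using X_sub_C_ne_zero (1 : k)
  have hgeo : ((X : k[X]) - 1) ^ (p - 1) = ∑ j ∈ Finset.range p, X ^ j := by
    apply mul_right_cancel₀ hne
    rw [← pow_succ, Nat.sub_add_cancel hp.one_lt.le, hpoly, geom_sum_mul]
  constructor
  · have := congrArg (aeval t) hpoly
    simpa [ht] using this
  · have := congrArg (aeval t) hgeo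
    simpa using this


lemma Equiv.Perm.inv_apply_self {α : Type*} (f : Equiv.Perm α) (x : α) : f⁻¹ (f x) = x := by
  simp

lemma Equiv.Perm.apply_inv_self {α : Type*} (f : Equiv.Perm α) (x : α) : f (f⁻¹ x) = x := by
  simp

/-- The `i`-th component of the semisimplification functor: for a `k`-vector space `V`
with endomorphism `x`, `φ_i(V,x) := (ker x ⊓ range x^(i-1)) ⧸ (ker x ⊓ range x^i)`. -/
abbrev phi {k V : Type*} [Field k] [AddCommGroup V] [Module k V]
    (x : V →ₗ[k] V) (i : ℕ) :=
  ↥(LinearMap.ker x ⊓ LinearMap.range (x ^ (i - 1))) ⧸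
    ((LinearMap.ker x ⊓ LinearMap.range (x ^ i)).comap
      (LinearMap.ker x ⊓ LinearMap.range (x ^ (i - 1))).subtype)

/-- for the permutation representation `V = (X → k)` of a permutation `σ`
with `σ^p = 1` over a field of characteristic `p`, with `T f = f ∘ σ⁻¹` and `x = T - id`,
we have `x^p = 0`, `dim φ_1(V,x)` is the number of fixed points of `σ`, and
`φ_i(V,x) = 0` for `2 ≤ i ≤ p-1`. -/
theorem stmt3 (p : ℕ) (hp : p.Prime) (k : Type*) [Field k] [CharP k p]
    (X : Type*) [Fintype X] (σ : Equiv.Perm X) (hσ : σ ^ p = 1)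
    (T : (X → k) →ₗ[k] (X → k)) (hT : ∀ f : X → k, T f = f ∘ ⇑σ⁻¹) :
    (T - LinearMap.id) ^ p = 0 ∧
    Module.finrank k (phi (T - LinearMap.id) 1) = Nat.card {a : X // σ a = a} ∧
    ∀ i, 2 ≤ i → i ≤ p - 1 → Subsingleton (phi (T - LinearMap.id) i) := by
  classical
  have hp1 : 1 < p := hp.one_lt
  set x : (X → k) →ₗ[k] (X → k) := T - LinearMap.id with hxdef
  -- powers of T
  have hTpow : ∀ (j : ℕ) (f : X → k), (T ^ j) f = f ∘ ⇑(σ ^ j)⁻¹ := by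
    intro j
    induction j with
    | zero => intro f; simp
    | succ n ih =>
      intro f
      have h1 : T ^ (n + 1) = T * T ^ n := by rw [pow_succ']
      rw [h1, Module.End.mul_apply, hT, ih]
      have h2 : (σ ^ (n + 1))⁻¹ = (σ ^ n)⁻¹ * σ⁻¹ := by
        rw [pow_succ', mul_inv_rev]
      rw [h2]
      rfl
  have hTp : T ^ p = 1 := by
    apply LinearMap.ext
    intro f
    rw [hTpow, hσ]
    simp
  have hx1 : x = T - 1 := by rw [hxdef, Module.End.one_eq_id]
  obtain ⟨hxp, hN⟩ := aux_poly hp (k := k) T hTp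
  rw [← hx1] at hxp hN
  -- kernel characterization
  have hker_iff : ∀ f : X → k, f ∈ LinearMap.ker x ↔ ∀ a, f (σ⁻¹ a) = f a := by
    intro f
    rw [LinearMap.mem_ker, hxdef]
    constructor
    · intro h a
      have h2 : T f - f = 0 := by simpa [LinearMap.sub_apply] using h
      have h3 : T f = f := sub_eq_zero.mp h2
      rw [hT] at h3
      exact congrFun h3 a
    · intro h
      have h3 : T f = f := by rw [hT]; funext a; exact h a
      simp [LinearMap.sub_apply, h3]
  -- invariance along the orbit
  have hinv_fwd : ∀ f : X → k, f ∈ LinearMap.ker x → ∀ (j : ℕ) (a : X),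
      f ((σ ^ j) a) = f a := by
    intro f hf j
    induction j with
    | zero => intro a; simp
    | succ n ih =>
      intro a
      have h1 : (σ ^ (n + 1)) a = σ ((σ ^ n) a) := by rw [pow_succ']; rfl
      rw [h1]
      have h2 := (hker_iff f).mp hf (σ ((σ ^ n) a))
      rw [Equiv.Perm.inv_apply_self] at h2
      rw [← h2, ih]
  have hinv_bwd : ∀ f : X → k, f ∈ LinearMap.ker x → ∀ (j : ℕ) (a : X),
      f ((σ ^ j)⁻¹ a) = f a := by
    intro f hf j a
    have := hinv_fwd f hf j ((σ ^ j)⁻¹ a)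
    rw [Equiv.Perm.apply_inv_self] at this
    exact this.symm
  -- reduction of powers of σ mod p
  have hred : ∀ j : ℕ, σ ^ j = σ ^ (j % p) := by
    intro j
    conv_lhs => rw [← Nat.div_add_mod j p]
    rw [pow_add, pow_mul, hσ, one_pow, one_mul]
  -- a point with period d, 0 < d < p, is fixed
  have hfix_of : ∀ (d : ℕ) (b : X), 0 < d → d < p → (σ ^ d) b = b → σ b = b := by
    intro d b hd0 hdp hdb
    haveI : NeZero p := ⟨hp.pos.ne'⟩
    have hnd : ¬ p ∣ d := fun h => absurd (Nat.le_of_dvd hd0 h) (not_le.mpr hdp)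
    have hco : Nat.Coprime d p := (hp.coprime_iff_not_dvd.mpr hnd).symm
    set u : ℕ := ((d : ZMod p)⁻¹).val with hu
    have hunit : IsUnit ((d : ℕ) : ZMod p) := by
      have := (ZMod.unitOfCoprime d hco).isUnit
      rwa [ZMod.coe_unitOfCoprime] at this
    have hcast : ((d * u : ℕ) : ZMod p) = ((1 : ℕ) : ZMod p) := by
      push_cast
      rw [hu, ZMod.natCast_val, ZMod.cast_id]
      exact ZMod.mul_inv_of_unit _ hunit
    have hmod : (d * u) % p = 1 := by
      have h2 : (d * u) % p = 1 % p := (ZMod.natCast_eq_natCast_iff _ _ _).mp hcast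
      rwa [Nat.mod_eq_of_lt hp1] at h2
    have hdu : d * u = p * ((d * u) / p) + 1 := by
      conv_lhs => rw [← Nat.div_add_mod (d * u) p]
      rw [hmod]
    have hiter : ∀ m : ℕ, ((σ ^ d) ^ m) b = b := by
      intro m
      induction m with
      | zero => simp
      | succ n ih => rw [pow_succ, Equiv.Perm.mul_apply, hdb, ih]
    have hpow : σ ^ (d * u) = σ := by
      rw [hdu, pow_add, pow_mul, hσ, one_pow, one_mul, pow_one]
    calc σ b = (σ ^ (d * u)) b := by rw [hpow]
      _ = ((σ ^ d) ^ u) b := by rw [pow_mul]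
      _ = b := hiter u
  -- orbit setoid and representatives
  let r : X → X → Prop := fun a b => ∃ j : ℕ, (σ ^ j) a = b
  have hrefl : ∀ a, r a a := fun a => ⟨0, by simp⟩
  have hsymm : ∀ {a b}, r a b → r b a := by
    rintro a b ⟨j, hj⟩
    refine ⟨p - j % p, ?_⟩
    rw [hred j] at hj
    have hjp : j % p < p := Nat.mod_lt _ hp.pos
    rw [← hj, ← Equiv.Perm.mul_apply, ← pow_add, Nat.sub_add_cancel hjp.le, hσ,
      Equiv.Perm.one_apply]
  have htrans : ∀ {a b c}, r a b → r b c → r a c := by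
    rintro a b c ⟨j, hj⟩ ⟨m, hm⟩
    exact ⟨m + j, by rw [pow_add, Equiv.Perm.mul_apply, hj, hm]⟩
  let s : Setoid X := ⟨r, ⟨hrefl, hsymm, htrans⟩⟩
  let q : X → X := fun b => (Quotient.mk s b).out
  have hq : ∀ b, r (q b) b := fun b => Quotient.exact (Quotient.out_eq (Quotient.mk s b))
  have hq2 : ∀ (b : X) (j : ℕ), q ((σ ^ j)⁻¹ b) = q b := by
    intro b j
    show (Quotient.mk s ((σ ^ j)⁻¹ b)).out = (Quotient.mk s b).out
    congr 1
    exact Quotient.sound ⟨j, by simp⟩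
  -- key lemma: invariant functions vanishing on fixed points lie in range x^(p-1)
  have key : ∀ f : X → k, f ∈ LinearMap.ker x → (∀ a, σ a = a → f a = 0) →
      f ∈ LinearMap.range (x ^ (p - 1)) := by
    intro f hf hvan
    rw [hN]
    set h : X → k := fun a => if a = q a then f a else 0 with hh
    refine ⟨h, ?_⟩
    funext b
    have happ : (∑ j ∈ Finset.range p, T ^ j) h b = ∑ j ∈ Finset.range p, h ((σ ^ j)⁻¹ b) := by
      rw [LinearMap.sum_apply, Finset.sum_apply]
      exact Finset.sum_congr rfl fun j _ => by rw [hTpow]; rfl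
    rw [happ]
    have hterm : ∀ j : ℕ, h ((σ ^ j)⁻¹ b) = if (σ ^ j) (q b) = b then f b else 0 := by
      intro j
      have e1 : h ((σ ^ j)⁻¹ b) = if (σ ^ j)⁻¹ b = q b then f ((σ ^ j)⁻¹ b) else 0 := by
        rw [hh]; simp only; rw [hq2]
      rw [e1]
      by_cases hc : (σ ^ j)⁻¹ b = q b
      · rw [if_pos hc, hinv_bwd f hf, if_pos]
        rw [← hc]; exact Equiv.Perm.apply_inv_self _ _
      · rw [if_neg hc, if_neg]
        intro hcc
        have h3 := congrArg ⇑(σ ^ j)⁻¹ hcc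
        rw [Equiv.Perm.inv_apply_self] at h3
        exact hc h3.symm
    rw [Finset.sum_congr rfl fun j _ => hterm j,
      Finset.sum_ite, Finset.sum_const, Finset.sum_const_zero, add_zero]
    by_cases hb : σ b = b
    · rw [hvan b hb, smul_zero]
    · obtain ⟨m, hm⟩ := hq b
      have hn : (σ ^ (m % p)) (q b) = b := by rw [← hred]; exact hm
      have hnp : m % p < p := Nat.mod_lt _ hp.pos
      have huni : ∀ j1 j2 : ℕ, j1 < j2 → j2 < p → (σ ^ j1) (q b) = b →
          (σ ^ j2) (q b) = b → False := by
        intro j1 j2 h12 h2p e1 e2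
        have hd : (σ ^ (j2 - j1)) b = b := by
          conv_lhs => rw [← e1]
          rw [← Equiv.Perm.mul_apply, ← pow_add, Nat.sub_add_cancel h12.le, e2]
        exact hb (hfix_of _ _ (by omega) (by omega) hd)
      have hfilter : (Finset.range p).filter (fun j => (σ ^ j) (q b) = b) = {m % p} := by
        ext j
        simp only [Finset.mem_filter, Finset.mem_range, Finset.mem_singleton]
        constructor
        · rintro ⟨hjp, hj⟩
          by_contra hne
          rcases lt_or_gt_of_ne hne with hlt | hgt
          · exact huni j (m % p) hlt hnp hj hn
          · exact huni (m % p) j hgt hjp hn hj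
        · rintro rfl
          exact ⟨hnp, hn⟩
      rw [hfilter, Finset.card_singleton, one_smul]
  -- monotonicity of ranges of powers
  have hrange_mono : ∀ a b : ℕ, a ≤ b →
      LinearMap.range (x ^ b) ≤ LinearMap.range (x ^ a) := by
    intro a b hab
    rw [show b = a + (b - a) by omega, pow_add]
    rintro v ⟨w, rfl⟩
    exact ⟨(x ^ (b - a)) w, rfl⟩
  -- elements of ker x ∩ range x vanish on fixed points
  have hvanish : ∀ f : X → k, f ∈ LinearMap.ker x → f ∈ LinearMap.range x →
      ∀ a, σ a = a → f a = 0 := by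
    rintro f hf ⟨g, rfl⟩ a ha
    have hinva : σ⁻¹ a = a := by
      conv_lhs => rw [← ha]
      exact Equiv.Perm.inv_apply_self _ _
    rw [hxdef]
    simp [LinearMap.sub_apply, hT, (by rwa [Equiv.Perm.inv_def] at hinva : σ.symm a = a)]
  refine ⟨hxp, ?_, ?_⟩
  · -- finrank of phi_1
    set S : Submodule k (X → k) :=
      LinearMap.ker x ⊓ LinearMap.range (x ^ (1 - 1)) with hS
    let Φ : ↥S →ₗ[k] ({a : X // σ a = a} → k) :=
      (LinearMap.funLeft k k (Subtype.val)).comp S.subtype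
    have hΦ : ∀ (f : ↥S) (a : {a : X // σ a = a}), Φ f a = (f : X → k) a.1 :=
      fun f a => rfl
    have hsurj : Function.Surjective Φ := by
      intro g
      set F : X → k := fun a => if h : σ a = a then g ⟨a, h⟩ else 0 with hF
      have hFker : F ∈ LinearMap.ker x := by
        rw [hker_iff]
        intro a
        by_cases ha : σ a = a
        · have hinva : σ⁻¹ a = a := by
            conv_lhs => rw [← ha]
            exact Equiv.Perm.inv_apply_self _ _
          rw [hinva]
        · have h2 : ¬ σ (σ⁻¹ a) = σ⁻¹ a := by
            intro hcc
            rw [Equiv.Perm.apply_inv_self] at hcc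
            apply ha
            conv_lhs => rw [hcc]
            rw [Equiv.Perm.apply_inv_self]
          rw [hF]
          simp only
          rw [dif_neg h2, dif_neg ha]
      have hFS : F ∈ S := by
        rw [hS, Submodule.mem_inf]
        refine ⟨hFker, ?_⟩
        rw [pow_zero]
        exact ⟨F, rfl⟩
      refine ⟨⟨F, hFS⟩, ?_⟩
      funext a
      rw [hΦ]
      show F a.1 = g a
      rw [hF]
      simp only
      rw [dif_pos a.2]
    have hkerΦ : LinearMap.ker Φ =
        (LinearMap.ker x ⊓ LinearMap.range (x ^ 1)).comap S.subtype := by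
      ext f
      simp only [LinearMap.mem_ker, Submodule.mem_comap, Submodule.mem_inf,
        Submodule.coe_subtype]
      constructor
      · intro h0
        have hf1 : (f : X → k) ∈ LinearMap.ker x := (Submodule.mem_inf.mp f.2).1
        have hvan : ∀ a, σ a = a → (f : X → k) a = 0 := by
          intro a ha
          exact congrFun h0 ⟨a, ha⟩
        refine ⟨hf1, ?_⟩
        rw [pow_one]
        exact hrange_mono 1 (p - 1) (by omega) (key _ hf1 hvan)
      · rintro ⟨hf1, hf2⟩
        rw [pow_one] at hf2
        funext a
        exact hvanish _ hf1 hf2 a.1 a.2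
    have e1 := Submodule.quotEquivOfEq _ _ hkerΦ.symm
    have e2 := Φ.quotKerEquivOfSurjective hsurj
    have hfr : Module.finrank k (phi x 1) =
        Module.finrank k ({a : X // σ a = a} → k) :=
      LinearEquiv.finrank_eq (e1.trans e2)
    rw [hfr, Module.finrank_pi, Nat.card_eq_fintype_card]
  · -- middle phi's vanish
    intro i h2 hi
    rw [Submodule.Quotient.subsingleton_iff, Submodule.comap_subtype_eq_top]
    intro f hf
    rw [Submodule.mem_inf] at hf ⊢
    obtain ⟨hf1, hf2⟩ := hf
    refine ⟨hf1, ?_⟩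
    have hf3 : f ∈ LinearMap.range x := by
      have := hrange_mono 1 (i - 1) (by omega) hf2
      rwa [pow_one] at this
    have hvan := hvanish f hf1 hf3
    exact hrange_mono i (p - 1) (by omega) (key f hf1 hvan)
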